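/- Let G be a group generated by a subset S, let D = D(S^G) be the Dehn quandle of G with respect to S, let n ≥ 2, and let π : D → D_n be a universal n-quandle quotient. If D_n is finite, then the quotient group G_n := G/⟪s^n : s ∈ S⟫ is finite, where ⟪·⟫ denotes normal closure. -/

import Mathlib

open Quandles

universe u v

/-- The Dehn quandle of a group `G` with respect to a subset `S`: the set of all
conjugates of elements of `S`, with conjugation as the quandle operation.
(The paper's `x * y = y x y⁻¹` is Mathlib's `y ◃ x`.) -/
def DehnQuandle (G : Type*) [Group G] (S : Set G) : Type _ :=
  {x : G // ∃ s ∈ S, IsConj s x}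

instance (G : Type*) [Group G] (S : Set G) : Quandle (DehnQuandle G S) where
  act x y := ⟨x.1 * y.1 * x.1⁻¹, by
    obtain ⟨s, hs, hc⟩ := y.2
    exact ⟨s, hs, hc.trans (isConj_iff.mpr ⟨x.1, rfl⟩)⟩⟩
  self_distrib := by
    rintro ⟨x, hx⟩ ⟨y, hy⟩ ⟨z, hz⟩
    apply Subtype.ext
    show x * (y * z * y⁻¹) * x⁻¹ = (x * y * x⁻¹) * (x * z * x⁻¹) * (x * y * x⁻¹)⁻¹
    group
  invAct x y := ⟨x.1⁻¹ * y.1 * x.1, by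
    obtain ⟨s, hs, hc⟩ := y.2
    exact ⟨s, hs, hc.trans (isConj_iff.mpr ⟨x.1⁻¹, by group⟩)⟩⟩
  left_inv := by
    rintro ⟨x, hx⟩ ⟨y, hy⟩
    apply Subtype.ext
    show x⁻¹ * (x * y * x⁻¹) * x = y
    group
  right_inv := by
    rintro ⟨x, hx⟩ ⟨y, hy⟩
    apply Subtype.ext
    show x * (x⁻¹ * y * x) * x⁻¹ = y
    group
  fix := by
    rintro ⟨x, hx⟩
    apply Subtype.ext
    show x * x * x⁻¹ = x
    group

/-- `Q` is an `n`-quandle: `x *ⁿ y = x` for all `x y` (the paper's `x * y` is `y ◃ x`). -/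
def IsNQuandle (Q : Type*) [Quandle Q] (n : ℕ) : Prop :=
  ∀ x y : Q, (fun a => y ◃ a)^[n] x = x

/-- `π : Q → Qn` is a universal `n`-quandle quotient. -/
def IsUniversalNQuandleQuotient {Q : Type u} {Qn : Type v} [Quandle Q] [Quandle Qn]
    (n : ℕ) (π : Q →◃ Qn) : Prop :=
  Function.Surjective π ∧ IsNQuandle Qn n ∧
    ∀ (Y : Type max u v) [Quandle Y], IsNQuandle Y n →
      ∀ f : Q →◃ Y, ∃! g : Qn →◃ Y, ∀ x, g (π x) = f x



section Aux

/-- Quandle structure on `ULift`. -/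
instance instQuandleULift {Q : Type u} [Quandle Q] : Quandle (ULift.{v} Q) where
  act x y := ⟨x.down ◃ y.down⟩
  self_distrib := by
    rintro ⟨x⟩ ⟨y⟩ ⟨z⟩
    exact congrArg ULift.up Shelf.self_distrib
  invAct x y := ⟨x.down ◃⁻¹ y.down⟩
  left_inv x y := congrArg ULift.up (Rack.left_inv x.down y.down)
  right_inv x y := congrArg ULift.up (Rack.right_inv x.down y.down)
  fix := by rintro ⟨x⟩; exact congrArg ULift.up (Quandle.fix)

lemma ulift_iterate {Q : Type u} [Quandle Q] (m : ℕ) (x y : ULift.{v} Q) :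
    (fun a => y ◃ a)^[m] x = ⟨(fun a => y.down ◃ a)^[m] x.down⟩ := by
  induction m with
  | zero => rfl
  | succ k ih => rw [Function.iterate_succ_apply', Function.iterate_succ_apply', ih]; rfl

lemma isNQuandle_ulift {Q : Type u} [Quandle Q] {n : ℕ} (h : IsNQuandle Q n) :
    IsNQuandle (ULift.{v} Q) n := by
  intro x y
  rw [ulift_iterate, h x.down y.down]

lemma dehn_iterate {H : Type*} [Group H] (T : Set H) (m : ℕ) (x y : DehnQuandle H T) :
    ((fun a => y ◃ a)^[m] x).1 = y.1 ^ m * x.1 * (y.1 ^ m)⁻¹ := by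
  induction m with
  | zero => simp
  | succ k ih =>
    rw [Function.iterate_succ_apply']
    show y.1 * ((fun a => y ◃ a)^[k] x).1 * y.1⁻¹ = _
    rw [ih, pow_succ']
    group

end Aux

section GroupFinite

open scoped commutatorElement

variable {H : Type*} [Group H]

lemma commutator_central_mul_left (a c : H) (z : Subgroup.center H) :
    ⁅a * (z : H), c⁆ = ⁅a, c⁆ := by
  have hz := Subgroup.mem_center_iff.mp z.2
  have hcz : (z : H) * c * (z : H)⁻¹ = c := by rw [← hz c, mul_inv_cancel_right]
  calc ⁅a * (z : H), c⁆ = a * ((z : H) * c * (z : H)⁻¹) * a⁻¹ * c⁻¹ := by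
        rw [commutatorElement_def]; group
    _ = ⁅a, c⁆ := by rw [hcz, commutatorElement_def]

lemma commutator_central_mul_right (a c : H) (w : Subgroup.center H) :
    ⁅a, c * (w : H)⁆ = ⁅a, c⁆ := by
  have hw := Subgroup.mem_center_iff.mp w.2
  have haw : (w : H) * a⁻¹ * (w : H)⁻¹ = a⁻¹ := by rw [← hw a⁻¹, mul_inv_cancel_right]
  calc ⁅a, c * (w : H)⁆ = a * c * ((w : H) * a⁻¹ * (w : H)⁻¹) * c⁻¹ := by
        rw [commutatorElement_def]; group
    _ = ⁅a, c⁆ := by rw [haw, commutatorElement_def]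

lemma finite_commutatorSet_of_finite_quotient_center
    (hfin : Finite (H ⧸ Subgroup.center H)) : Finite (commutatorSet H) := by
  set Z := Subgroup.center H
  have hsub : commutatorSet H ⊆
      Set.range (fun p : (H ⧸ Z) × (H ⧸ Z) => ⁅p.1.out, p.2.out⁆) := by
    rintro x ⟨g, h, rfl⟩
    refine ⟨(QuotientGroup.mk g, QuotientGroup.mk h), ?_⟩
    obtain ⟨z, hz⟩ := QuotientGroup.mk_out_eq_mul Z g
    obtain ⟨w, hw⟩ := QuotientGroup.mk_out_eq_mul Z h
    simp only [hz, hw]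
    rw [commutator_central_mul_left, commutator_central_mul_right]
  exact Set.finite_coe_iff.mpr ((Set.finite_range _).subset hsub)

/-- Dietzmann-type finiteness via Schur's theorem. -/
lemma finite_of_finite_conjclosed_torsion_generators
    (n : ℕ) (hn : 0 < n) (D : Set H) (hDfin : D.Finite)
    (hgen : Subgroup.closure D = ⊤)
    (htor : ∀ x ∈ D, x ^ n = 1)
    (hconj : ∀ (g : H), ∀ x ∈ D, g * x * g⁻¹ ∈ D) : Finite H := by
  classical
  haveI : Finite ↥D := hDfin.to_subtype
  -- conjugation permutation representation on D
  let c : H →* Equiv.Perm ↥D :=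
    { toFun := fun g =>
        { toFun := fun x => ⟨g * x * g⁻¹, hconj g x x.2⟩
          invFun := fun x => ⟨g⁻¹ * x * g, by
            have := hconj g⁻¹ x x.2; simpa using this⟩
          left_inv := fun x => by ext; simp [mul_assoc]
          right_inv := fun x => by ext; simp [mul_assoc] }
      map_one' := by ext x; simp
      map_mul' := fun a b => by ext x; simp [mul_assoc] }
  have hker : c.ker ≤ Subgroup.center H := by
    intro g hg
    rw [Subgroup.mem_center_iff]
    intro h
    have hmem : h ∈ Subgroup.closure D := hgen ▸ Subgroup.mem_top h
    induction hmem using Subgroup.closure_induction with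
    | mem x hx =>
      have : c g ⟨x, hx⟩ = ⟨x, hx⟩ := by rw [hg]; rfl
      have hx' : g * x * g⁻¹ = x := congrArg Subtype.val this
      calc x * g = g * x * g⁻¹ * g := by rw [hx']
        _ = g * x := by group
    | one => simp
    | mul x y hx hy ihx ihy => rw [mul_assoc, ihy, ← mul_assoc, ihx, mul_assoc]
    | inv x hx ih =>
      calc x⁻¹ * g = x⁻¹ * (g * x) * x⁻¹ := by group
        _ = x⁻¹ * (x * g) * x⁻¹ := by rw [ih]
        _ = g * x⁻¹ := by group
  haveI : Finite (H ⧸ c.ker) := Finite.of_equiv ↥c.range (QuotientGroup.quotientKerEquivRange c).symm.toEquiv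
  haveI hZfin : Finite (H ⧸ Subgroup.center H) := by
    have hsurj : Function.Surjective
        (QuotientGroup.map c.ker (Subgroup.center H) (MonoidHom.id H) hker) := by
      intro y
      obtain ⟨h, rfl⟩ := QuotientGroup.mk_surjective y
      exact ⟨QuotientGroup.mk h, rfl⟩
    exact Finite.of_surjective _ hsurj
  haveI : Finite (commutatorSet H) := finite_commutatorSet_of_finite_quotient_center hZfin
  haveI : Finite (_root_.commutator H) := inferInstance
  -- abelianization is finite
  have hofsurj : Function.Surjective (Abelianization.of : H →* Abelianization H) :=
    fun a => Quotient.inductionOn a (fun h => ⟨h, rfl⟩)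
  have hclos : Subgroup.closure ((Abelianization.of : H →* Abelianization H) '' D) = ⊤ := by
    rw [← MonoidHom.map_closure, hgen, Subgroup.map_top_of_surjective _ hofsurj]
  haveI : Group.FG (Abelianization H) :=
    Group.fg_iff.mpr ⟨_, hclos, hDfin.image _⟩
  have htorA : Monoid.IsTorsion (Abelianization H) := by
    intro a
    have hpow : a ^ n = 1 := by
      have hmem : a ∈ Subgroup.closure ((Abelianization.of : H →* Abelianization H) '' D) :=
        hclos ▸ Subgroup.mem_top a
      have hle : Subgroup.closure ((Abelianization.of : H →* Abelianization H) '' D) ≤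
          (powMonoidHom n : Abelianization H →* Abelianization H).ker := by
        rw [Subgroup.closure_le]
        rintro _ ⟨x, hx, rfl⟩
        show Abelianization.of x ^ n = 1
        rw [← map_pow, htor x hx, map_one]
      exact hle hmem
    exact isOfFinOrder_iff_pow_eq_one.mpr ⟨n, hn, hpow⟩
  haveI : Finite (Abelianization H) := CommGroup.finite_of_fg_torsion _ htorA
  haveI : Finite (H ⧸ _root_.commutator H) := ‹Finite (Abelianization H)›
  exact Finite.of_equiv _ (Subgroup.groupEquivQuotientProdSubgroup
    (s := _root_.commutator H)).symm

end GroupFinite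


/-- if a universal `n`-quandle quotient `Dₙ` of the Dehn quandle `D(S^G)`
is finite, then `Gₙ = G/⟪sⁿ : s ∈ S⟫` is finite. -/
theorem stmt_5 {G : Type u} [Group G] (S : Set G) (hS : Subgroup.closure S = ⊤)
    {n : ℕ} (hn : 2 ≤ n) {Dn : Type v} [Quandle Dn]
    (π : DehnQuandle G S →◃ Dn) (hπ : IsUniversalNQuandleQuotient n π)
    (hfin : Finite Dn) :
    Finite (G ⧸ Subgroup.normalClosure {g : G | ∃ s ∈ S, g = s ^ n}) := by
  classical
  obtain ⟨hπsurj, hDnq, huniv⟩ := hπ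
  set N := Subgroup.normalClosure {g : G | ∃ s ∈ S, g = s ^ n} with hN
  let φ : G →* G ⧸ N := QuotientGroup.mk' N
  have hφsurj : Function.Surjective φ := QuotientGroup.mk'_surjective N
  set T : Set (G ⧸ N) := φ '' S with hT
  have hpow : ∀ x : G ⧸ N, (∃ s ∈ T, IsConj s x) → x ^ n = 1 := by
    rintro x ⟨t, ⟨s, hs, rfl⟩, hc⟩
    obtain ⟨u, hu⟩ := isConj_iff.mp hc
    have hsn : φ (s ^ n) = 1 :=
      (QuotientGroup.eq_one_iff _).mpr (Subgroup.subset_normalClosure ⟨s, hs, rfl⟩)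
    have h1 : x = MulAut.conj u (φ s) := by rw [MulAut.conj_apply, hu]
    rw [h1, ← map_pow, ← map_pow, hsn, map_one]
  have hDq : IsNQuandle (DehnQuandle (G ⧸ N) T) n := by
    intro x y
    apply Subtype.ext
    rw [dehn_iterate, hpow y.1 y.2]
    simp
  let f : DehnQuandle G S →◃ ULift.{v} (DehnQuandle (G ⧸ N) T) :=
    { toFun := fun x => ⟨⟨φ x.1, by
        obtain ⟨s, hs, hc⟩ := x.2
        exact ⟨φ s, ⟨s, hs, rfl⟩, φ.map_isConj hc⟩⟩⟩
      map_act' := by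
        rintro ⟨x, hx⟩ ⟨y, hy⟩
        refine congrArg ULift.up (Subtype.ext ?_)
        show φ (x * y * x⁻¹) = φ x * φ y * (φ x)⁻¹
        simp }
  obtain ⟨g, hg, -⟩ := huniv (ULift.{v} (DehnQuandle (G ⧸ N) T)) (isNQuandle_ulift hDq) f
  have hsurj : Function.Surjective (fun d : Dn => (g d).down) := by
    intro z
    obtain ⟨t, ⟨s, hs, rfl⟩, hc⟩ := z.2
    obtain ⟨u, hu⟩ := isConj_iff.mp hc
    obtain ⟨v, rfl⟩ := hφsurj u
    refine ⟨π ⟨v * s * v⁻¹, s, hs, isConj_iff.mpr ⟨v, rfl⟩⟩, ?_⟩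
    show (g (π _)).down = z
    have hg' := hg ⟨v * s * v⁻¹, s, hs, isConj_iff.mpr ⟨v, rfl⟩⟩
    rw [hg']
    apply Subtype.ext
    show φ (v * s * v⁻¹) = z.1
    rw [← hu]
    simp
  have hfinD : Finite {x : G ⧸ N | ∃ s ∈ T, IsConj s x} :=
    Finite.of_surjective (fun d : Dn => (g d).down) hsurj
  have hDfin : Set.Finite {x : G ⧸ N | ∃ s ∈ T, IsConj s x} := Set.finite_coe_iff.mp hfinD
  have hTtop : Subgroup.closure T = ⊤ := by
    rw [hT, ← MonoidHom.map_closure, hS, Subgroup.map_top_of_surjective _ hφsurj]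
  have hclos : Subgroup.closure {x : G ⧸ N | ∃ s ∈ T, IsConj s x} = ⊤ := by
    rw [eq_top_iff, ← hTtop]
    exact Subgroup.closure_mono (fun t ht => ⟨t, ht, IsConj.refl t⟩)
  have hcc : ∀ (k : G ⧸ N), ∀ x ∈ {x : G ⧸ N | ∃ s ∈ T, IsConj s x},
      k * x * k⁻¹ ∈ {x : G ⧸ N | ∃ s ∈ T, IsConj s x} := by
    rintro k x ⟨s, hs, hc⟩
    exact ⟨s, hs, hc.trans (isConj_iff.mpr ⟨k, rfl⟩)⟩
  exact finite_of_finite_conjclosed_torsion_generators n (by omega) _ hDfin hclos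
    (fun x hx => hpow x hx) hcc
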